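/- Let G = (V,E) be a finite graph with n = |V| and m = |E|, M = m+1, and L(β) = M·Σ_j(|β_j|_2 + |β_j−1|_2) + Σ_{(u,v)∈E}|β_u+β_v−1|_2 for β : V → ℚ. Denote by L* the minimum of L over ℚ^V. Then maxcut(G) = M·n + m − L*. -/

import Mathlib

lemma pn_one_le (x : ℚ) : 1 ≤ padicNorm 2 x + padicNorm 2 (x - 1) := by
  have h2 : padicNorm 2 (x - (x-1)) ≤ max (padicNorm 2 x) (padicNorm 2 (x-1)) :=
    padicNorm.sub
  have he : x - (x - 1) = 1 := by ring
  rw [he, padicNorm.one] at h2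
  have := padicNorm.nonneg (p := 2) x
  have := padicNorm.nonneg (p := 2) (x - 1)
  rcases le_max_iff.mp h2 with h4 | h4 <;> linarith

lemma pn_sub_one_ge (c : ℚ) (h : padicNorm 2 c < 1) : 1 ≤ padicNorm 2 (c - 1) := by
  have h2 : padicNorm 2 (c - (c-1)) ≤ max (padicNorm 2 c) (padicNorm 2 (c-1)) :=
    padicNorm.sub
  have he : c - (c - 1) = 1 := by ring
  rw [he, padicNorm.one] at h2
  rcases le_max_iff.mp h2 with h4 | h4 <;> linarith

lemma pn_add_one_ge (c : ℚ) (h : padicNorm 2 c < 1) : 1 ≤ padicNorm 2 (c + 1) := by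
  have := pn_sub_one_ge (-c) (by rwa [padicNorm.neg])
  have he : -c - 1 = -(c + 1) := by ring
  rwa [he, padicNorm.neg] at this

lemma pn_round (x : ℚ) (h : padicNorm 2 x ≤ 1) :
    padicNorm 2 x < 1 ∨ padicNorm 2 (x - 1) < 1 := by
  have hdnz : ((x.den : ℚ)) ≠ 0 := by exact_mod_cast x.den_nz
  by_cases hden : (2:ℤ) ∣ (x.den : ℤ)
  · exfalso
    have hnum : ¬ (2:ℤ) ∣ x.num := by
      intro hd
      have h2 : (2:ℕ) ∣ x.num.natAbs := by omega
      have h2' : (2:ℕ) ∣ x.den := by exact_mod_cast hden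
      have := Nat.Coprime.eq_one_of_dvd (x.reduced.coprime_dvd_left h2) h2'
      omega
    have hn1 : padicNorm 2 (x.num : ℚ) = 1 := (padicNorm.int_eq_one_iff x.num).mpr hnum
    have hd1 : padicNorm 2 ((x.den : ℤ) : ℚ) < 1 := (padicNorm.int_lt_one_iff _).mpr hden
    have hdp : 0 < padicNorm 2 ((x.den : ℤ) : ℚ) := by
      have hne : ((x.den : ℤ) : ℚ) ≠ 0 := by push_cast; exact hdnz
      exact lt_of_le_of_ne (padicNorm.nonneg _) (Ne.symm (padicNorm.nonzero hne))
    have hx : x = (x.num : ℚ) / ((x.den : ℤ) : ℚ) := by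
      push_cast; exact (Rat.num_div_den x).symm
    have heq := padicNorm.div (p := 2) (x.num : ℚ) ((x.den : ℤ) : ℚ)
    rw [← hx] at heq
    rw [hn1] at heq
    have : 1 < padicNorm 2 x := by
      rw [heq, lt_div_iff₀ hdp]; linarith
    linarith
  · have hd1 : padicNorm 2 ((x.den : ℤ) : ℚ) = 1 := (padicNorm.int_eq_one_iff _).mpr hden
    by_cases hnum : (2:ℤ) ∣ x.num
    · left
      have hn : padicNorm 2 (x.num : ℚ) < 1 := (padicNorm.int_lt_one_iff _).mpr hnum
      have hx : x = (x.num : ℚ) / ((x.den : ℤ) : ℚ) := by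
        push_cast; exact (Rat.num_div_den x).symm
      have heq := padicNorm.div (p := 2) (x.num : ℚ) ((x.den : ℤ) : ℚ)
      rw [← hx, hd1, div_one] at heq
      rw [heq]; exact hn
    · right
      have hdvd : (2:ℤ) ∣ (x.num - x.den) := by omega
      have hn : padicNorm 2 ((x.num - x.den : ℤ) : ℚ) < 1 := (padicNorm.int_lt_one_iff _).mpr hdvd
      have hx : x - 1 = ((x.num - x.den : ℤ) : ℚ) / ((x.den : ℤ) : ℚ) := by
        push_cast
        rw [sub_div, Rat.num_div_den, div_self hdnz]
      have heq := padicNorm.div (p := 2) ((x.num - x.den : ℤ) : ℚ) ((x.den : ℤ) : ℚ)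
      rw [← hx, hd1, div_one] at heq
      rw [heq]; exact hn

theorem stmt_19 (V : Type) [Fintype V] [DecidableEq V] [Nonempty V]
    (E : Finset (V × V)) (M : ℚ) (hM : M = E.card + 1)
    (L : (V → ℚ) → ℚ)
    (hL : ∀ β, L β =
      M * ∑ j : V, (padicNorm 2 (β j) + padicNorm 2 (β j - 1)) +
        ∑ e ∈ E, padicNorm 2 (β e.1 + β e.2 - 1)) :
    ∃ Lstar : ℚ, IsLeast (Set.range L) Lstar ∧
      (Finset.univ.sup' Finset.univ_nonempty
          (fun s : V → Bool => ((E.filter (fun e => s e.1 ≠ s e.2)).card : ℚ))) =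
        M * (Fintype.card V) + E.card - Lstar := by
  classical
  have pn0 : padicNorm 2 (0:ℚ) = 0 := padicNorm.zero
  have pn1 : padicNorm 2 (1:ℚ) = 1 := padicNorm.one
  have pnm1 : padicNorm 2 (-1:ℚ) = 1 := by rw [padicNorm.neg]; exact padicNorm.one
  set cut : (V → Bool) → ℚ := fun s => ((E.filter (fun e => s e.1 ≠ s e.2)).card : ℚ) with hcut
  set sup : ℚ := Finset.univ.sup' Finset.univ_nonempty cut with hsup
  have hM0 : (0:ℚ) < M := by rw [hM]; positivity
  -- value of L on binary vectors
  have Lbin : ∀ s : V → Bool,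
      L (fun j => if s j then (1:ℚ) else 0)
        = M * (Fintype.card V) + ((E.card : ℚ) - cut s) := by
    intro s
    rw [hL]
    have hv : ∑ j : V, (padicNorm 2 (if s j then (1:ℚ) else 0) +
        padicNorm 2 ((if s j then (1:ℚ) else 0) - 1)) = (Fintype.card V : ℚ) := by
      rw [Finset.sum_congr rfl (fun j _ => ?_), Finset.sum_const, Finset.card_univ,
        nsmul_eq_mul, mul_one]
      cases hj : s j <;> simp [hj, pn0, pn1, padicNorm.neg]
    have he : ∑ e ∈ E, padicNorm 2
        ((if s e.1 then (1:ℚ) else 0) + (if s e.2 then (1:ℚ) else 0) - 1)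
        = (E.card : ℚ) - cut s := by
      rw [Finset.sum_congr rfl (g := fun e => if s e.1 ≠ s e.2 then (0:ℚ) else 1) (fun e he => ?_)]
      · rw [Finset.sum_ite, Finset.sum_const, Finset.sum_const, smul_zero, zero_add,
          nsmul_eq_mul, mul_one]
        have hc := Finset.card_filter_add_card_filter_not
          (s := E) (p := fun e => s e.1 ≠ s e.2)
        rw [hcut]
        have : (E.filter (fun e => ¬ s e.1 ≠ s e.2)).card
            = E.card - (E.filter (fun e => s e.1 ≠ s e.2)).card := by omega
        rw [this]
        have hle : (E.filter (fun e => s e.1 ≠ s e.2)).card ≤ E.card :=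
          Finset.card_filter_le _ _
        push_cast [hle]
        ring
      · show padicNorm 2 _ = if s e.1 ≠ s e.2 then (0:ℚ) else 1
        cases h1 : s e.1 <;> cases h2 : s e.2 <;>
          norm_num [h1, h2, pn0, pn1, pnm1]
    rw [hv, he]
  obtain ⟨s0, -, hs0⟩ := Finset.exists_mem_eq_sup' (Finset.univ_nonempty) cut
  have hcutnn : ∀ s, 0 ≤ cut s := fun s => by rw [hcut]; positivity
  have hsupnn : 0 ≤ sup := le_trans (hcutnn s0) (hs0 ▸ le_rfl)
  refine ⟨M * (Fintype.card V) + (E.card : ℚ) - sup, ⟨⟨fun j => if s0 j then 1 else 0, ?_⟩, ?_⟩,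
    by ring⟩
  · rw [Lbin s0, hsup, hs0]; ring
  · rintro y ⟨β, rfl⟩
    rw [hL]
    have hedge_nn : (0:ℚ) ≤ ∑ e ∈ E, padicNorm 2 (β e.1 + β e.2 - 1) :=
      Finset.sum_nonneg fun e _ => padicNorm.nonneg _
    by_cases hb : ∀ j, padicNorm 2 (β j) ≤ 1
    · -- rounding
      set s : V → Bool := fun j => decide (padicNorm 2 (β j - 1) < 1) with hsdef
      have hvert : (Fintype.card V : ℚ) ≤
          ∑ j : V, (padicNorm 2 (β j) + padicNorm 2 (β j - 1)) := by
        calc (Fintype.card V : ℚ) = ∑ _j : V, (1:ℚ) := by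
              rw [Finset.sum_const, Finset.card_univ, nsmul_eq_mul, mul_one]
          _ ≤ _ := Finset.sum_le_sum fun j _ => pn_one_le (β j)
      have hedge : (E.card : ℚ) - cut s ≤ ∑ e ∈ E, padicNorm 2 (β e.1 + β e.2 - 1) := by
        have step : ∀ e ∈ E, (if s e.1 ≠ s e.2 then (0:ℚ) else 1)
            ≤ padicNorm 2 (β e.1 + β e.2 - 1) := by
          intro e _
          by_cases hse : s e.1 ≠ s e.2
          · rw [if_pos hse]; exact padicNorm.nonneg _
          · rw [if_neg hse]
            rw [not_ne_iff] at hse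
            cases h1 : s e.1
            · have h2 : s e.2 = false := by rw [← hse, h1]
              have hc1 : padicNorm 2 (β e.1) < 1 := by
                rcases pn_round (β e.1) (hb e.1) with h | h
                · exact h
                · rw [hsdef] at h1; simp [h] at h1
              have hc2 : padicNorm 2 (β e.2) < 1 := by
                rcases pn_round (β e.2) (hb e.2) with h | h
                · exact h
                · rw [hsdef] at h2; simp [h] at h2
              have hsum : padicNorm 2 (β e.1 + β e.2) < 1 := by
                have := padicNorm.nonarchimedean (p := 2) (q := β e.1) (r := β e.2)
                rcases le_max_iff.mp this with h | h <;> linarith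
              exact pn_sub_one_ge _ hsum
            · have h2 : s e.2 = true := by rw [← hse, h1]
              rw [hsdef] at h1 h2
              have hc1 : padicNorm 2 (β e.1 - 1) < 1 := by simpa using h1
              have hc2 : padicNorm 2 (β e.2 - 1) < 1 := by simpa using h2
              have hsum : padicNorm 2 ((β e.1 - 1) + (β e.2 - 1)) < 1 := by
                have := padicNorm.nonarchimedean (p := 2) (q := β e.1 - 1) (r := β e.2 - 1)
                rcases le_max_iff.mp this with h | h <;> linarith
              have := pn_add_one_ge _ hsum
              rwa [show (β e.1 - 1) + (β e.2 - 1) + 1 = β e.1 + β e.2 - 1 by ring] at this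
        calc (E.card : ℚ) - cut s = ∑ e ∈ E, (if s e.1 ≠ s e.2 then (0:ℚ) else 1) := by
              rw [Finset.sum_ite, Finset.sum_const, Finset.sum_const, smul_zero, zero_add,
                nsmul_eq_mul, mul_one, hcut]
              have : (E.filter (fun e => ¬ s e.1 ≠ s e.2)).card
                  = E.card - (E.filter (fun e => s e.1 ≠ s e.2)).card := by
                have := Finset.card_filter_add_card_filter_not
                  (s := E) (p := fun e => s e.1 ≠ s e.2)
                omega
              rw [this]
              have hle : (E.filter (fun e => s e.1 ≠ s e.2)).card ≤ E.card :=
                Finset.card_filter_le _ _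
              push_cast [hle]
              ring
          _ ≤ _ := Finset.sum_le_sum step
      have hcs : cut s ≤ sup := hsup ▸ Finset.le_sup' cut (Finset.mem_univ s)
      nlinarith [mul_le_mul_of_nonneg_left hvert (le_of_lt hM0)]
    · -- some coordinate has norm > 1
      push_neg at hb
      obtain ⟨j, hj⟩ := hb
      have hj2 : 1 < padicNorm 2 (β j - 1) := by
        have h2 : padicNorm 2 ((β j - 1) - (-1)) ≤
            max (padicNorm 2 (β j - 1)) (padicNorm 2 (-1:ℚ)) := padicNorm.sub
        rw [show (β j - 1) - (-1) = β j by ring, pnm1] at h2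
        rcases le_max_iff.mp h2 with h | h <;> linarith
      have hvert : (Fintype.card V : ℚ) + 1 <
          ∑ j : V, (padicNorm 2 (β j) + padicNorm 2 (β j - 1)) := by
        have hjmem : j ∈ (Finset.univ : Finset V) := Finset.mem_univ j
        rw [← Finset.sum_erase_add _ _ hjmem]
        have h1 : ((Finset.univ.erase j).card : ℚ) ≤
            ∑ i ∈ Finset.univ.erase j, (padicNorm 2 (β i) + padicNorm 2 (β i - 1)) := by
          calc ((Finset.univ.erase j).card : ℚ) = ∑ _i ∈ Finset.univ.erase j, (1:ℚ) := by
                rw [Finset.sum_const, nsmul_eq_mul, mul_one]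
            _ ≤ _ := Finset.sum_le_sum fun i _ => pn_one_le (β i)
        have hcard : (Finset.univ.erase j).card = Fintype.card V - 1 := by
          rw [Finset.card_erase_of_mem hjmem, Finset.card_univ]
        have hpos : 1 ≤ Fintype.card V := Fintype.card_pos
        rw [hcard] at h1
        have : ((Fintype.card V - 1 : ℕ) : ℚ) = (Fintype.card V : ℚ) - 1 := by
          push_cast [hpos]; ring
        rw [this] at h1
        linarith
      have hMvert := mul_lt_mul_of_pos_left hvert hM0
      have hE : (E.card : ℚ) + 1 = M := by rw [hM]
      nlinarith
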